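/- Let S₁, …, Sₙ be mutually independent random variables with values in finite sets, and let T₁, …, Tₙ be any random variables on the same probability space with values in finite sets. Then I((S₁,…,Sₙ); (T₁,…,Tₙ)) ≥ Σᵢ I(Sᵢ; Tᵢ). -/

import Mathlib

open Finset Real

noncomputable def pmfOf {Ω α : Type*} [Fintype Ω] [DecidableEq α]
    (μ : Ω → ℝ) (X : Ω → α) (x : α) : ℝ :=
  ∑ ω : Ω, if X ω = x then μ ω else 0

noncomputable def entropy {Ω α : Type*} [Fintype Ω] [Fintype α] [DecidableEq α]
    (μ : Ω → ℝ) (X : Ω → α) : ℝ :=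
  ∑ x : α, -(pmfOf μ X x * Real.logb 2 (pmfOf μ X x))

noncomputable def mutualInfo {Ω α β : Type*} [Fintype Ω] [Fintype α] [Fintype β]
    [DecidableEq α] [DecidableEq β] (μ : Ω → ℝ) (X : Ω → α) (Y : Ω → β) : ℝ :=
  entropy μ X + entropy μ Y - entropy μ (fun ω => (X ω, Y ω))

noncomputable def condMutualInfo {Ω α β γ : Type*} [Fintype Ω] [Fintype α] [Fintype β] [Fintype γ]
    [DecidableEq α] [DecidableEq β] [DecidableEq γ]
    (μ : Ω → ℝ) (X : Ω → α) (Y : Ω → β) (Z : Ω → γ) : ℝ :=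
  entropy μ (fun ω => (X ω, Z ω)) + entropy μ (fun ω => (Y ω, Z ω))
    - entropy μ (fun ω => (X ω, Y ω, Z ω)) - entropy μ Z

noncomputable def binEnt (t : ℝ) : ℝ :=
  -(t * Real.logb 2 t) - (1 - t) * Real.logb 2 (1 - t)


section aux
variable {Ω : Type*} [Fintype Ω] {μ : Ω → ℝ}

lemma pmf_nonneg (hμ : ∀ ω, 0 ≤ μ ω) {α : Type*} [DecidableEq α] (X : Ω → α) (x : α) :
    0 ≤ pmfOf μ X x :=
  Finset.sum_nonneg fun ω _ => by split <;> simp [hμ ω]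

lemma le_pmf (hμ : ∀ ω, 0 ≤ μ ω) {α : Type*} [DecidableEq α] (X : Ω → α) (ω : Ω) :
    μ ω ≤ pmfOf μ X (X ω) := by
  have h := Finset.single_le_sum (f := fun ω' => if X ω' = X ω then μ ω' else 0)
    (fun i _ => by split <;> simp [hμ i]) (Finset.mem_univ ω)
  simpa [pmfOf] using h

lemma pmf_expect {α : Type*} [Fintype α] [DecidableEq α] (X : Ω → α) (g : α → ℝ) :
    ∑ x : α, pmfOf μ X x * g x = ∑ ω : Ω, μ ω * g (X ω) := by
  unfold pmfOf
  simp_rw [Finset.sum_mul, ite_mul, zero_mul]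
  rw [Finset.sum_comm]
  simp [Finset.sum_ite_eq]

lemma entropy_eq {α : Type*} [Fintype α] [DecidableEq α] (X : Ω → α) :
    entropy μ X = -∑ ω : Ω, μ ω * Real.logb 2 (pmfOf μ X (X ω)) := by
  rw [← pmf_expect X (fun x => Real.logb 2 (pmfOf μ X x))]
  simp [entropy]

lemma sum_pmf (hμ1 : ∑ ω : Ω, μ ω = 1) {α : Type*} [Fintype α] [DecidableEq α] (X : Ω → α) :
    ∑ x : α, pmfOf μ X x = 1 := by
  have := pmf_expect (μ := μ) X (fun _ => 1)
  simpa [hμ1] using this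

lemma pmf_marginal {α β : Type*} [Fintype α] [DecidableEq α] [DecidableEq β]
    (X : Ω → α) (Y : Ω → β) (b : β) :
    ∑ a : α, pmfOf μ (fun ω => (X ω, Y ω)) (a, b) = pmfOf μ Y b := by
  unfold pmfOf
  rw [Finset.sum_comm]
  refine Finset.sum_congr rfl fun ω _ => ?_
  simp [Prod.ext_iff, ite_and, Finset.sum_ite_eq]

lemma gibbs {ι : Type*} [Fintype ι] (p q : ι → ℝ) (hp : ∀ x, 0 ≤ p x)
    (hq : ∀ x, 0 ≤ q x) (hp1 : ∑ x : ι, p x = 1) (hq1 : ∑ x : ι, q x ≤ 1)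
    (hpq : ∀ x, 0 < p x → 0 < q x) :
    ∑ x : ι, p x * Real.logb 2 (q x) ≤ ∑ x : ι, p x * Real.logb 2 (p x) := by
  have hl2 : (0:ℝ) < Real.log 2 := Real.log_pos one_lt_two
  have key : ∀ x, p x * Real.logb 2 (q x) - p x * Real.logb 2 (p x)
      ≤ (q x - p x) / Real.log 2 := by
    intro x
    rcases eq_or_lt_of_le (hp x) with h | h
    · rw [← h]
      simpa using div_nonneg (hq x) hl2.le
    · have hqx := hpq x h
      have h1 : Real.log (q x / p x) ≤ q x / p x - 1 :=
        Real.log_le_sub_one_of_pos (by positivity)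
      have h2 : Real.logb 2 (q x) - Real.logb 2 (p x)
          = Real.log (q x / p x) / Real.log 2 := by
        rw [Real.log_div hqx.ne' h.ne']
        simp [Real.logb, sub_div]
      rw [← mul_sub, h2]
      calc p x * (Real.log (q x / p x) / Real.log 2)
          ≤ p x * ((q x / p x - 1) / Real.log 2) := by
            apply mul_le_mul_of_nonneg_left _ h.le
            exact div_le_div_of_nonneg_right h1 hl2.le
        _ = (q x - p x) / Real.log 2 := by
            field_simp
  have hsum : ∑ x : ι, (p x * Real.logb 2 (q x) - p x * Real.logb 2 (p x))
      ≤ ∑ x : ι, (q x - p x) / Real.log 2 :=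
    Finset.sum_le_sum fun x _ => key x
  rw [Finset.sum_sub_distrib, ← Finset.sum_div, Finset.sum_sub_distrib, hp1] at hsum
  have : (∑ x : ι, q x - 1) / Real.log 2 ≤ 0 :=
    div_nonpos_of_nonpos_of_nonneg (by linarith) hl2.le
  linarith

end aux

theorem stmt5 {Ω : Type*} [Fintype Ω] {n : ℕ}
    {α β : Fin n → Type*} [∀ i, Fintype (α i)] [∀ i, DecidableEq (α i)]
    [∀ i, Fintype (β i)] [∀ i, DecidableEq (β i)]
    (μ : Ω → ℝ) (hμ : ∀ ω, 0 ≤ μ ω) (hμ1 : ∑ ω : Ω, μ ω = 1)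
    (S : ∀ i, Ω → α i) (T : ∀ i, Ω → β i)
    (hIndep : ∀ s : ∀ i, α i,
      pmfOf μ (fun ω => (fun i => S i ω)) s = ∏ i : Fin n, pmfOf μ (S i) (s i)) :
    ∑ i : Fin n, mutualInfo μ (S i) (T i)
      ≤ mutualInfo μ (fun ω => (fun i => S i ω)) (fun ω => (fun i => T i ω)) := by
  classical
  set SS : Ω → ∀ i, α i := fun ω => (fun i => S i ω) with hSS
  set TT : Ω → ∀ i, β i := fun ω => (fun i => T i ω) with hTT
  set p : ((∀ i, α i) × (∀ i, β i)) → ℝ := pmfOf μ (fun ω => (SS ω, TT ω)) with hp_def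
  set q : ((∀ i, α i) × (∀ i, β i)) → ℝ := fun x =>
    pmfOf μ TT x.2 * ∏ i : Fin n,
      (pmfOf μ (fun ω => (S i ω, T i ω)) (x.1 i, x.2 i) / pmfOf μ (T i) (x.2 i)) with hq_def
  -- basic positivity facts
  have hp_nonneg : ∀ x, 0 ≤ p x := fun x => pmf_nonneg hμ _ x
  have hq_nonneg : ∀ x, 0 ≤ q x := by
    intro x
    apply mul_nonneg (pmf_nonneg hμ _ _)
    exact Finset.prod_nonneg fun i _ => div_nonneg (pmf_nonneg hμ _ _) (pmf_nonneg hμ _ _)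
  have hp1 : ∑ x, p x = 1 := sum_pmf hμ1 _
  have hq1 : ∑ x, q x ≤ 1 := by
    rw [Fintype.sum_prod_type, Finset.sum_comm]
    have hinner : ∀ t : ∀ i, β i, ∑ s : ∀ i, α i, ∏ i : Fin n,
        (pmfOf μ (fun ω => (S i ω, T i ω)) (s i, t i) / pmfOf μ (T i) (t i)) ≤ 1 := by
      intro t
      have hps := Finset.prod_univ_sum (fun i : Fin n => (Finset.univ : Finset (α i)))
        (fun i a => pmfOf μ (fun ω => (S i ω, T i ω)) (a, t i) / pmfOf μ (T i) (t i))
      rw [Fintype.piFinset_univ] at hps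
      rw [← hps]
      apply Finset.prod_le_one
      · intro i _
        exact Finset.sum_nonneg fun a _ => div_nonneg (pmf_nonneg hμ _ _) (pmf_nonneg hμ _ _)
      · intro i _
        rw [← Finset.sum_div, pmf_marginal (S i) (T i) (t i)]
        rcases eq_or_lt_of_le (pmf_nonneg hμ (T i) (t i)) with h | h
        · rw [← h]; simp
        · rw [div_self h.ne']
    calc ∑ t : ∀ i, β i, ∑ s : ∀ i, α i, q (s, t)
        ≤ ∑ t : ∀ i, β i, pmfOf μ TT t := by
          apply Finset.sum_le_sum
          intro t _
          simp only [hq_def]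
          rw [← Finset.mul_sum]
          calc pmfOf μ TT t * ∑ s : ∀ i, α i, ∏ i : Fin n,
              (pmfOf μ (fun ω => (S i ω, T i ω)) (s i, t i) / pmfOf μ (T i) (t i))
              ≤ pmfOf μ TT t * 1 :=
                mul_le_mul_of_nonneg_left (hinner t) (pmf_nonneg hμ _ _)
            _ = pmfOf μ TT t := mul_one _
      _ = 1 := sum_pmf hμ1 _
  have hpq : ∀ x, 0 < p x → 0 < q x := by
    rintro ⟨s, t⟩ hx
    have hex : ∃ ω ∈ Finset.univ, 0 < (if (SS ω, TT ω) = (s, t) then μ ω else 0) := by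
      by_contra hc
      push_neg at hc
      have : p (s, t) ≤ 0 := Finset.sum_nonpos fun ω _ => hc ω (Finset.mem_univ ω)
      linarith
    obtain ⟨ω, -, hw⟩ := hex
    have hval : (SS ω, TT ω) = (s, t) := by
      by_contra hne
      rw [if_neg hne] at hw
      exact lt_irrefl 0 hw
    rw [if_pos hval] at hw
    obtain ⟨hs, ht⟩ := Prod.mk.injEq .. ▸ hval
    subst hs; subst ht
    apply mul_pos (lt_of_lt_of_le hw (le_pmf hμ TT ω))
    apply Finset.prod_pos
    intro i _
    exact div_pos (lt_of_lt_of_le hw (le_pmf hμ (fun ω => (S i ω, T i ω)) ω))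
      (lt_of_lt_of_le hw (le_pmf hμ (T i) ω))
  -- cross entropy evaluation
  have hXE : ∑ x, p x * Real.logb 2 (q x)
      = -entropy μ TT + ∑ i : Fin n,
          (-entropy μ (fun ω => (S i ω, T i ω)) + entropy μ (T i)) := by
    rw [hp_def, pmf_expect (fun ω => (SS ω, TT ω)) (fun x => Real.logb 2 (q x))]
    have step : ∀ ω : Ω, μ ω * Real.logb 2 (q (SS ω, TT ω))
        = μ ω * Real.logb 2 (pmfOf μ TT (TT ω))
          + ∑ i : Fin n, (μ ω * Real.logb 2 (pmfOf μ (fun ω => (S i ω, T i ω)) (S i ω, T i ω))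
            - μ ω * Real.logb 2 (pmfOf μ (T i) (T i ω))) := by
      intro ω
      rcases eq_or_lt_of_le (hμ ω) with h | h
      · simp [← h]
      · have h1 : Real.logb 2 (q (SS ω, TT ω))
            = Real.logb 2 (pmfOf μ TT (TT ω))
              + ∑ i : Fin n, (Real.logb 2 (pmfOf μ (fun ω => (S i ω, T i ω)) (S i ω, T i ω))
                - Real.logb 2 (pmfOf μ (T i) (T i ω))) := by
          have hcoord : ∀ i : Fin n, ((SS ω i : α i), (TT ω i : β i)) = (S i ω, T i ω) :=
            fun i => rfl
          simp only [hq_def, hcoord]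
          rw [Real.logb_mul (lt_of_lt_of_le h (le_pmf hμ TT ω)).ne' ?_,
            Real.logb_prod]
          · congr 1
            refine Finset.sum_congr rfl fun i _ => ?_
            rw [Real.logb_div (lt_of_lt_of_le h (le_pmf hμ (fun ω => (S i ω, T i ω)) ω)).ne'
              (lt_of_lt_of_le h (le_pmf hμ (T i) ω)).ne']
          · intro i _
            exact div_ne_zero (lt_of_lt_of_le h (le_pmf hμ (fun ω => (S i ω, T i ω)) ω)).ne'
              (lt_of_lt_of_le h (le_pmf hμ (T i) ω)).ne'
          · apply Finset.prod_ne_zero_iff.mpr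
            intro i _
            exact div_ne_zero (lt_of_lt_of_le h (le_pmf hμ (fun ω => (S i ω, T i ω)) ω)).ne'
              (lt_of_lt_of_le h (le_pmf hμ (T i) ω)).ne'
        rw [h1, mul_add, Finset.mul_sum]
        congr 1
        exact Finset.sum_congr rfl fun i _ => by ring
    rw [Finset.sum_congr rfl fun ω _ => step ω, Finset.sum_add_distrib, Finset.sum_comm]
    rw [entropy_eq TT, neg_neg]
    congr 1
    refine Finset.sum_congr rfl fun i _ => ?_
    rw [Finset.sum_sub_distrib, entropy_eq (μ := μ) (fun ω => (S i ω, T i ω)),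
      entropy_eq (μ := μ) (T i)]
    ring
  have hPP : ∑ x, p x * Real.logb 2 (p x) = -entropy μ (fun ω => (SS ω, TT ω)) := by
    rw [hp_def, pmf_expect (fun ω => (SS ω, TT ω))
        (fun x => Real.logb 2 (pmfOf μ (fun ω => (SS ω, TT ω)) x)),
      entropy_eq (μ := μ) (fun ω => (SS ω, TT ω)), neg_neg]
  have hgibbs := gibbs p q hp_nonneg hq_nonneg hp1 hq1 hpq
  rw [hXE, hPP] at hgibbs
  -- independence: entropy of joint source equals sum of entropies
  have hHS : entropy μ SS = ∑ i : Fin n, entropy μ (S i) := by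
    rw [entropy_eq SS]
    have step : ∀ ω : Ω, μ ω * Real.logb 2 (pmfOf μ SS (SS ω))
        = ∑ i : Fin n, μ ω * Real.logb 2 (pmfOf μ (S i) (S i ω)) := by
      intro ω
      rcases eq_or_lt_of_le (hμ ω) with h | h
      · simp [← h]
      · have hcoord : ∀ i : Fin n, (SS ω i : α i) = S i ω := fun i => rfl
        rw [hIndep (SS ω)]
        simp only [hcoord]
        rw [Real.logb_prod _ _ (fun i _ => (lt_of_lt_of_le h (le_pmf hμ (S i) ω)).ne'),
          Finset.mul_sum]
    rw [Finset.sum_congr rfl fun ω _ => step ω, Finset.sum_comm]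
    rw [← Finset.sum_neg_distrib]
    exact Finset.sum_congr rfl fun i _ => (entropy_eq (S i)).symm
  simp only [mutualInfo, Finset.sum_add_distrib, Finset.sum_sub_distrib]
  have hexp : ∑ i : Fin n, (-entropy μ (fun ω => (S i ω, T i ω)) + entropy μ (T i))
      = -∑ i : Fin n, entropy μ (fun ω => (S i ω, T i ω)) + ∑ i : Fin n, entropy μ (T i) := by
    rw [Finset.sum_add_distrib, Finset.sum_neg_distrib]
  rw [hexp] at hgibbs
  linarith [hgibbs, hHS]
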